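/- Every indecomposable complex X in C_{η+2}(proj Λ) satisfies X^1 = 0 or X^{η+2} = 0. -/

import Mathlib

open CategoryTheory CategoryTheory.Limits ZeroObject

noncomputable section

namespace Paper

/-- The ambient category: cochain complexes of right `Λ`-modules indexed by `ℤ`. -/
abbrev Amb (Λ : Type) [Ring Λ] := CochainComplex (ModuleCat.{0} Λᵐᵒᵖ) ℤ

variable {Λ : Type} [Ring Λ]

/-- All cells are finitely generated projective right `Λ`-modules. -/
def ProjCells (X : Amb Λ) : Prop :=
  ∀ i : ℤ, Module.Finite Λᵐᵒᵖ (X.X i) ∧ Module.Projective Λᵐᵒᵖ (X.X i)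

/-- The complex is supported in the window `[a, b]`. -/
def Supp (a b : ℤ) (X : Amb Λ) : Prop :=
  ∀ i : ℤ, (i < a ∨ b < i) → IsZero (X.X i)

/-- Object of the category `C_{[a,b]}(proj Λ)` of complexes of finitely generated
projective modules concentrated in the window `[a, b]`.  (The category
`C_n(proj Λ)` of the paper corresponds to the window `[1, n]`; a window `[a, b]`
corresponds to `C_{b-a+1}(proj Λ)` after the canonical reindexing.) -/
def InC (a b : ℤ) (X : Amb Λ) : Prop := Supp a b X ∧ ProjCells X

def IsSect {X Y : Amb Λ} (f : X ⟶ Y) : Prop := ∃ h : Y ⟶ X, f ≫ h = 𝟙 X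

def IsRetr {X Y : Amb Λ} (f : X ⟶ Y) : Prop := ∃ h : Y ⟶ X, h ≫ f = 𝟙 Y

/-- `f` is irreducible in `C_{[a,b]}(proj Λ)`. -/
def Irred (a b : ℤ) {X Y : Amb Λ} (f : X ⟶ Y) : Prop :=
  ¬ IsSect f ∧ ¬ IsRetr f ∧
    ∀ (W : Amb Λ), InC a b W → ∀ (g : X ⟶ W) (h : W ⟶ Y),
      g ≫ h = f → IsRetr h ∨ IsSect g

/-- Indecomposable complex. -/
def Indec (X : Amb Λ) : Prop :=
  ¬ IsZero X ∧ ∀ (A B : Amb Λ), (X ≅ A ⊞ B) → IsZero A ∨ IsZero B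

/-- A conflation: in every degree a split short exact sequence. -/
def DegSplit {X Y Z : Amb Λ} (f : X ⟶ Y) (g : Y ⟶ Z) : Prop :=
  ∀ j : ℤ, ∃ w : f.f j ≫ g.f j = 0,
    Nonempty (ShortComplex.mk (f.f j) (g.f j) w).Splitting

/-- Minimal left almost split morphism in `C_{[a,b]}(proj Λ)`. -/
def MinLeftAS (a b : ℤ) {X Y : Amb Λ} (f : X ⟶ Y) : Prop :=
  ¬ IsSect f ∧
    (∀ (W : Amb Λ), InC a b W → ∀ u : X ⟶ W, ¬ IsSect u → ∃ v : Y ⟶ W, f ≫ v = u) ∧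
    (∀ u : Y ⟶ Y, f ≫ u = f → IsIso u)

/-- Minimal right almost split morphism in `C_{[a,b]}(proj Λ)`. -/
def MinRightAS (a b : ℤ) {Y Z : Amb Λ} (g : Y ⟶ Z) : Prop :=
  ¬ IsRetr g ∧
    (∀ (W : Amb Λ), InC a b W → ∀ u : W ⟶ Z, ¬ IsRetr u → ∃ v : W ⟶ Y, v ≫ g = u) ∧
    (∀ u : Y ⟶ Y, u ≫ g = g → IsIso u)

/-- Almost split sequence in `C_{[a,b]}(proj Λ)`. -/
def AlmostSplit (a b : ℤ) {X Y Z : Amb Λ} (f : X ⟶ Y) (g : Y ⟶ Z) : Prop :=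
  DegSplit f g ∧ MinLeftAS a b f ∧ MinRightAS a b g

/-- `X` (supported in a window starting at `a`) can be extended to the left. -/
def ExtLeft (a : ℤ) (X : Amb Λ) : Prop :=
  ∃ P : ModuleCat.{0} Λᵐᵒᵖ, Module.Finite Λᵐᵒᵖ P ∧ Module.Projective Λᵐᵒᵖ P ∧
    ∃ δ : P ⟶ X.X a, δ ≠ 0 ∧ δ ≫ X.d a (a + 1) = 0

/-- `X` (supported in a window ending at `b`) can be extended to the right. -/
def ExtRight (b : ℤ) (X : Amb Λ) : Prop :=
  ∃ P : ModuleCat.{0} Λᵐᵒᵖ, Module.Finite Λᵐᵒᵖ P ∧ Module.Projective Λᵐᵒᵖ P ∧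
    ∃ δ : X.X b ⟶ P, δ ≠ 0 ∧ X.d (b - 1) b ≫ δ = 0

/-- Bounded complex. -/
def BddCplx (X : Amb Λ) : Prop := ∃ a b : ℤ, Supp a b X

/-- Contractible complex, i.e. zero in the homotopy category. -/
def Contractible (X : Amb Λ) : Prop := Nonempty (Homotopy (𝟙 X) 0)

/-- Indecomposable nonzero object of `K^b(proj Λ)`. -/
def HIndec (X : Amb Λ) : Prop :=
  ¬ Contractible X ∧
    ∀ (A B : Amb Λ), ProjCells A → BddCplx A → ProjCells B → BddCplx B →
      Nonempty (HomotopyEquiv X (A ⊞ B)) → Contractible A ∨ Contractible B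

/-- The candidate lengths of `X` as an object of `K^b(proj Λ)`. -/
def lenSet (X : Amb Λ) : Set ℕ :=
  {d | ∃ (Y : Amb Λ) (r s : ℤ), r ≤ s ∧ Nonempty (HomotopyEquiv X Y) ∧
        ProjCells Y ∧ Supp r s Y ∧ d = (s - r).toNat}

/-- `ℓ(X)`. -/
def len (X : Amb Λ) : ℕ := sInf (lenSet X)

/-- `η` is the strong global dimension of `Λ`. -/
def IsSGdim (Λ : Type) [Ring Λ] (η : ℕ) : Prop :=
  IsGreatest {d : ℕ | ∃ X : Amb Λ, ProjCells X ∧ BddCplx X ∧ HIndec X ∧ len X = d} η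

/-- Brutal truncation of a complex to the set of degrees satisfying `P`. -/
def chop (P : ℤ → Prop) [DecidablePred P] (X : Amb Λ) : Amb Λ where
  X i := if P i then X.X i else 0
  d i j :=
    if hi : P i then
      if hj : P j then
        eqToHom (if_pos hi) ≫ X.d i j ≫ eqToHom (if_pos hj).symm
      else 0
    else 0
  shape i j h := by
    by_cases hi : P i
    · by_cases hj : P j
      · simp [hi, hj, X.shape i j h]
      · simp [hi, hj]
    · simp [hi]
  d_comp_d' i j k hij hjk := by
    by_cases hi : P i <;> by_cases hj : P j <;> by_cases hk : P k <;>
      simp [hi, hj, hk]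

/-- Brutal truncation of a chain map. -/
def chopMap (P : ℤ → Prop) [DecidablePred P] {X Y : Amb Λ} (f : X ⟶ Y) :
    chop P X ⟶ chop P Y where
  f i :=
    if h : P i then eqToHom (if_pos h) ≫ f.f i ≫ eqToHom (if_pos h).symm
    else 0
  comm' i j hij := by
    by_cases hi : P i <;> by_cases hj : P j <;>
      simp [chop, hi, hj] <;> rfl

/-- `E_{[a,b]}`-projective complex (lifting against proper epimorphisms). -/
def EProj (a b : ℤ) (P : Amb Λ) : Prop :=
  ∀ (W₁ W₂ : Amb Λ), InC a b W₁ → InC a b W₂ → ∀ v : W₁ ⟶ W₂,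
    (∀ j : ℤ, Epi (v.f j)) → ∀ f : P ⟶ W₂, ∃ g : P ⟶ W₁, g ≫ v = f

/-- `E_{[a,b]}`-injective complex (extending along proper monomorphisms). -/
def EInj (a b : ℤ) (I : Amb Λ) : Prop :=
  ∀ (W₁ W₂ : Amb Λ), InC a b W₁ → InC a b W₂ → ∀ v : W₁ ⟶ W₂,
    (∀ j : ℤ, Mono (v.f j)) → ∀ f : W₁ ⟶ I, ∃ g : W₂ ⟶ I, v ≫ g = f


lemma ring_unit_or_nilpotent {S : Type*} [Ring S] (x ψ : S) (m : ℕ)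
    (hc : Commute x ψ) (h : x ^ m = x ^ (m + 1) * ψ)
    (hidem : ∀ e : S, e * e = e → e = 0 ∨ e = 1) :
    IsUnit x ∨ IsNilpotent x := by
  have key : ∀ k : ℕ, x ^ m = x ^ (m + k) * ψ ^ k := by
    intro k
    induction k with
    | zero => simp
    | succ k ih =>
      have hxk : ψ * x ^ k = x ^ k * ψ := (hc.symm.pow_right k).eq
      calc x ^ m = x ^ (m + k) * ψ ^ k := ih
        _ = x ^ m * x ^ k * ψ ^ k := by rw [pow_add]
        _ = x ^ (m + 1) * ψ * x ^ k * ψ ^ k := by rw [← h]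
        _ = x ^ (m + 1) * (ψ * x ^ k) * ψ ^ k := by rw [mul_assoc (x ^ (m+1))]
        _ = x ^ (m + 1) * (x ^ k * ψ) * ψ ^ k := by rw [hxk]
        _ = x ^ (m + 1) * x ^ k * (ψ * ψ ^ k) := by
              rw [mul_assoc (x ^ (m+1)), mul_assoc, mul_assoc]
        _ = x ^ (m + 1 + k) * ψ ^ (k + 1) := by rw [← pow_add, ← pow_succ']
        _ = x ^ (m + (k + 1)) * ψ ^ (k + 1) := by rw [show m + 1 + k = m + (k+1) from by omega]
  set e := x ^ m * ψ ^ m with he_def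
  have fact1 : x ^ m * e = x ^ m := by
    rw [he_def, ← mul_assoc, ← pow_add]
    exact (key m).symm
  have hxψm : x ^ m * ψ ^ m = ψ ^ m * x ^ m := (hc.pow_pow m m).eq
  have he : e * e = e := by
    calc e * e = x ^ m * (ψ ^ m * x ^ m) * ψ ^ m := by
            rw [he_def, mul_assoc, mul_assoc, mul_assoc]
      _ = x ^ m * (x ^ m * ψ ^ m) * ψ ^ m := by rw [← hxψm]
      _ = (x ^ m * e) * ψ ^ m := by rw [he_def, mul_assoc (x ^ m)]
      _ = e := by rw [fact1]
  rcases hidem e he with h0 | h1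
  · exact Or.inr ⟨m, by rw [← fact1, h0, mul_zero]⟩
  · left
    have hxy : x * (x ^ m * ψ ^ (m+1)) = 1 := by
      calc x * (x ^ m * ψ ^ (m+1)) = (x * x ^ m) * ψ ^ (m+1) := by rw [mul_assoc]
        _ = x ^ (m+1) * ψ ^ (m+1) := by rw [← pow_succ']
        _ = x ^ (m+1) * (ψ * ψ ^ m) := by rw [pow_succ' ψ m]
        _ = (x ^ (m+1) * ψ) * ψ ^ m := by rw [mul_assoc]
        _ = x ^ m * ψ ^ m := by rw [← h]
        _ = 1 := h1
    have hyx : (x ^ m * ψ ^ (m+1)) * x = 1 := by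
      have hcm : ψ ^ (m+1) * x = x * ψ ^ (m+1) := ((hc.pow_right (m+1)).eq).symm
      calc (x ^ m * ψ ^ (m+1)) * x = x ^ m * (ψ ^ (m+1) * x) := by rw [mul_assoc]
        _ = x ^ m * (x * ψ ^ (m+1)) := by rw [hcm]
        _ = (x ^ m * x) * ψ ^ (m+1) := by rw [mul_assoc]
        _ = x ^ (m+1) * ψ ^ (m+1) := by rw [← pow_succ]
        _ = x ^ (m+1) * (ψ * ψ ^ m) := by rw [pow_succ' ψ m]
        _ = (x ^ (m+1) * ψ) * ψ ^ m := by rw [mul_assoc]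
        _ = x ^ m * ψ ^ m := by rw [← h]
        _ = 1 := h1
    exact ⟨⟨x, x ^ m * ψ ^ (m+1), hxy, hyx⟩, rfl⟩

lemma exists_pow_rel {K : Type*} [Field K] {S : Type*} [Ring S] [Algebra K S]
    (x : S) (hx : IsIntegral K x) :
    ∃ (m : ℕ) (ψ : S), Commute x ψ ∧ x ^ m = x ^ (m + 1) * ψ := by
  obtain ⟨p, hmon, hroot⟩ := hx
  obtain ⟨q, hpq, hndvd⟩ := p.exists_eq_pow_rootMultiplicity_mul_and_not_dvd hmon.ne_zero 0
  rw [Polynomial.C_0, sub_zero] at hpq hndvd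
  set m := p.rootMultiplicity 0 with hm
  have hc0 : q.coeff 0 ≠ 0 := fun hcc => hndvd (Polynomial.X_dvd_iff.mpr hcc)
  have hq' : q.divX * Polynomial.X + Polynomial.C (q.coeff 0) = q := q.divX_mul_X_add
  set s := Polynomial.aeval x q.divX with hs
  have hxs : Commute x s := by
    show x * s = s * x
    have h1 : (Polynomial.aeval x) (Polynomial.X * q.divX)
        = (Polynomial.aeval x) (q.divX * Polynomial.X) := by rw [mul_comm]
    simpa [map_mul] using h1
  have h0 : x ^ m * (s * x + algebraMap K S (q.coeff 0)) = 0 := by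
    have h2 : (Polynomial.aeval x) p = x ^ m * (s * x + algebraMap K S (q.coeff 0)) := by
      conv_lhs => rw [hpq, ← hq']
      simp [map_mul, map_add, map_pow]
      rfl
    rw [← Polynomial.aeval_def] at hroot
    rw [← h2, hroot]
  have h3 : x ^ m * (s * x) = -((q.coeff 0) • x ^ m) := by
    have h4 : x ^ m * algebraMap K S (q.coeff 0) = (q.coeff 0) • x ^ m := by
      rw [← Algebra.commutes, ← Algebra.smul_def]
    rw [mul_add, h4] at h0
    exact eq_neg_of_add_eq_zero_left h0
  refine ⟨m, (-(q.coeff 0)⁻¹) • s, hxs.smul_right _, ?_⟩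
  symm
  calc x ^ (m+1) * ((-(q.coeff 0)⁻¹) • s) = (-(q.coeff 0)⁻¹) • (x ^ (m+1) * s) := mul_smul_comm _ _ _
    _ = (-(q.coeff 0)⁻¹) • (x ^ m * (s * x)) := by
        rw [pow_succ, mul_assoc, hxs.eq]
    _ = (-(q.coeff 0)⁻¹) • (-((q.coeff 0) • x ^ m)) := by rw [h3]
    _ = ((q.coeff 0)⁻¹ * (q.coeff 0)) • x ^ m := by
        rw [neg_smul, smul_neg, neg_neg, smul_smul]
    _ = x ^ m := by rw [inv_mul_cancel₀ hc0, one_smul]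
section AuxCat

lemma chain_ext {X Y : Amb Λ} {f g : X ⟶ Y} (h : ∀ i, f.f i = g.f i) : f = g := by
  apply HomologicalComplex.hom_ext
  intro i
  exact h i

lemma idem_eq_zero_or_id (X : Amb Λ) (hind : Indec X) (e : X ⟶ X) (he : e ≫ e = e) :
    e = 0 ∨ e = 𝟙 X := by
  obtain ⟨A, iA, pA, hA1, hA2⟩ := CategoryTheory.IsIdempotentComplete.idempotents_split X e he
  have he' : (𝟙 X - e) ≫ (𝟙 X - e) = 𝟙 X - e := by
    simp [Preadditive.sub_comp, Preadditive.comp_sub, he]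
  obtain ⟨B, iB, pB, hB1, hB2⟩ :=
    CategoryTheory.IsIdempotentComplete.idempotents_split X (𝟙 X - e) he'
  have hiA : iA ≫ e = iA := by rw [← hA2, ← Category.assoc, hA1, Category.id_comp]
  have hiB : iB ≫ e = 0 := by
    have h1 : iB ≫ (𝟙 X - e) = iB := by rw [← hB2, ← Category.assoc, hB1, Category.id_comp]
    rw [Preadditive.comp_sub, Category.comp_id] at h1
    exact sub_eq_self.mp h1
  have hpA : e ≫ pA = pA := by
    calc e ≫ pA = pA ≫ (iA ≫ pA) := by rw [← hA2, Category.assoc]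
      _ = pA := by rw [hA1, Category.comp_id]
  have hpB : (𝟙 X - e) ≫ pB = pB := by
    calc (𝟙 X - e) ≫ pB = pB ≫ (iB ≫ pB) := by rw [← hB2, Category.assoc]
      _ = pB := by rw [hB1, Category.comp_id]
  have hiApB : iA ≫ pB = 0 := by
    rw [← hpB, Preadditive.sub_comp, Preadditive.comp_sub, Category.id_comp,
      ← Category.assoc, hiA, sub_self]
  have hiBpA : iB ≫ pA = 0 := by
    rw [← hpA, ← Category.assoc, hiB, Limits.zero_comp]
  have hφψ : biprod.lift pA pB ≫ biprod.desc iA iB = 𝟙 X := by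
    rw [biprod.lift_desc, hA2, hB2]
    abel
  have hψφ : biprod.desc iA iB ≫ biprod.lift pA pB = 𝟙 (A ⊞ B) := by
    apply biprod.hom_ext'
    · rw [← Category.assoc, biprod.inl_desc, Category.comp_id]
      apply biprod.hom_ext
      · rw [Category.assoc, biprod.lift_fst, hA1, biprod.inl_fst]
      · rw [Category.assoc, biprod.lift_snd, hiApB, biprod.inl_snd]
    · rw [← Category.assoc, biprod.inr_desc, Category.comp_id]
      apply biprod.hom_ext
      · rw [Category.assoc, biprod.lift_fst, hiBpA, biprod.inr_fst]
      · rw [Category.assoc, biprod.lift_snd, hB1, biprod.inr_snd]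
  have hiso : X ≅ A ⊞ B := ⟨biprod.lift pA pB, biprod.desc iA iB, hφψ, hψφ⟩
  rcases hind.2 A B hiso with hz | hz
  · left
    rw [← hA2, hz.eq_of_src iA 0, Limits.comp_zero]
  · right
    have : 𝟙 X - e = 0 := by rw [← hB2, hz.eq_of_src iB 0, Limits.comp_zero]
    rw [← sub_eq_zero, ← neg_sub, this, neg_zero]

end AuxCat
section AuxScalar

variable (K : Type) [Field K] [Algebra K Λ]

/-- Scalar multiplication by `c : K` as a `Λᵐᵒᵖ`-linear endomorphism. -/
def smulLin (c : K) (M : ModuleCat.{0} Λᵐᵒᵖ) : M ⟶ M :=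
  ModuleCat.ofHom
  { toFun := fun m => (MulOpposite.op (algebraMap K Λ c)) • m
    map_add' := fun m n => smul_add _ m n
    map_smul' := fun r m => by
      simp only [RingHom.id_apply]
      rw [smul_smul, smul_smul]
      congr 1
      rw [← MulOpposite.op_unop r, ← MulOpposite.op_mul, ← MulOpposite.op_mul]
      exact congrArg MulOpposite.op (Algebra.commutes c r.unop).symm }

lemma smulLin_apply (c : K) (M : ModuleCat.{0} Λᵐᵒᵖ) (m : M) :
    smulLin K c M m = (MulOpposite.op (algebraMap K Λ c)) • m := rfl

/-- Scalar multiplication by `c : K` as a chain map. -/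
def smulEnd (c : K) (X : Amb Λ) : X ⟶ X where
  f i := smulLin K c (X.X i)
  comm' i j _ := by
    ext m
    show X.d i j (smulLin K c (X.X i) m) = smulLin K c (X.X j) (X.d i j m)
    rw [smulLin_apply, smulLin_apply]
    exact map_smul (X.d i j).hom _ m

lemma smulEnd_f_apply (c : K) (X : Amb Λ) (i : ℤ) (m : X.X i) :
    (smulEnd K c X).f i m = (MulOpposite.op (algebraMap K Λ c)) • m := rfl

/-- The scalar action as a ring homomorphism to the endomorphism ring of a complex. -/
def scalarRingHom (X : Amb Λ) : K →+* CategoryTheory.End X where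
  toFun c := smulEnd K c X
  map_one' := by
    apply chain_ext
    intro i
    ext m
    show (MulOpposite.op (algebraMap K Λ 1)) • m = m
    simp
  map_mul' c d := by
    apply chain_ext
    intro i
    ext m
    show (MulOpposite.op (algebraMap K Λ (c * d))) • m
      = (smulEnd K d X ≫ smulEnd K c X).f i m
    show MulOpposite.op (algebraMap K Λ (c * d)) • m
      = MulOpposite.op (algebraMap K Λ c) • MulOpposite.op (algebraMap K Λ d) • m
    rw [smul_smul, ← MulOpposite.op_mul, ← map_mul, mul_comm d c]
  map_zero' := by
    apply chain_ext
    intro i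
    ext m
    show (MulOpposite.op (algebraMap K Λ 0)) • m = (0 : X.X i →ₗ[Λᵐᵒᵖ] X.X i) m
    simp
  map_add' c d := by
    apply chain_ext
    intro i
    ext m
    show (MulOpposite.op (algebraMap K Λ (c + d))) • m = ((smulEnd K c X) + (smulEnd K d X)).f i m
    rw [HomologicalComplex.add_f_apply]
    show _ = (smulEnd K c X).f i m + (smulEnd K d X).f i m
    rw [smulEnd_f_apply, smulEnd_f_apply, map_add, MulOpposite.op_add, add_smul]

lemma scalarRingHom_central (X : Amb Λ) (c : K) (y : CategoryTheory.End X) :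
    scalarRingHom K X c * y = y * scalarRingHom K X c := by
  show (y : X ⟶ X) ≫ (smulEnd K c X) = (smulEnd K c X : X ⟶ X) ≫ y
  apply chain_ext
  intro i
  ext m
  show (smulEnd K c X).f i (HomologicalComplex.Hom.f y i m)
    = HomologicalComplex.Hom.f y i ((smulEnd K c X).f i m)
  rw [smulEnd_f_apply, smulEnd_f_apply]
  exact (map_smul (HomologicalComplex.Hom.f y i).hom _ m).symm

/-- The `K`-algebra structure on the endomorphism ring of a complex. -/
def endAlgebra (X : Amb Λ) : Algebra K (CategoryTheory.End X) :=
  (scalarRingHom K X).toAlgebra' (scalarRingHom_central K X)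

end AuxScalar
section AuxFin

attribute [local instance] RestrictScalars.moduleOrig

variable (K : Type) [Field K] [Algebra K Λ] [FiniteDimensional K Λ]

instance restrictModK (M : ModuleCat.{0} Λᵐᵒᵖ) :
    @Module K (RestrictScalars K Λᵐᵒᵖ M) _ AddCommGroup.toAddCommMonoid :=
  RestrictScalars.module K Λᵐᵒᵖ M

/-- Restriction of scalars of a `Λᵐᵒᵖ`-linear map to `K`. -/
def restrictK {M N : ModuleCat.{0} Λᵐᵒᵖ} (f : M ⟶ N) :
    RestrictScalars K Λᵐᵒᵖ M →ₗ[K] RestrictScalars K Λᵐᵒᵖ N :=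
  { toFun := fun m => f m
    map_add' := fun m n => f.hom.map_add m n
    map_smul' := fun c m => by
      show f ((algebraMap K Λᵐᵒᵖ c) • m) = (algebraMap K Λᵐᵒᵖ c) • f m
      exact f.hom.map_smul _ m }

lemma restrict_findim (M : ModuleCat.{0} Λᵐᵒᵖ) (h : Module.Finite Λᵐᵒᵖ M) :
    FiniteDimensional K (RestrictScalars K Λᵐᵒᵖ M) := by
  have hΛ : Module.Finite K Λᵐᵒᵖ := Module.Finite.equiv (MulOpposite.opLinearEquiv K)
  have hM : Module.Finite Λᵐᵒᵖ (RestrictScalars K Λᵐᵒᵖ M) := h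
  exact Module.Finite.trans Λᵐᵒᵖ (RestrictScalars K Λᵐᵒᵖ M)

instance restrictACM (M : ModuleCat.{0} Λᵐᵒᵖ) : AddCommMonoid (RestrictScalars K Λᵐᵒᵖ M) :=
  AddCommGroup.toAddCommMonoid

/-- Iterated composition. -/
def cpow {X : Amb Λ} (φ : X ⟶ X) : ℕ → (X ⟶ X)
  | 0 => 𝟙 X
  | n + 1 => cpow φ n ≫ φ

lemma cpow_eq_pow {X : Amb Λ} (φ : X ⟶ X) (n : ℕ) :
    cpow φ n = (CategoryTheory.End.of φ) ^ n := by
  induction n with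
  | zero => rfl
  | succ n ih =>
    show cpow φ n ≫ φ = (CategoryTheory.End.of φ) ^ (n+1)
    rw [ih, pow_succ']
    rfl

lemma end_unit_or_nilpotent (K : Type) [Field K] [Algebra K Λ] [FiniteDimensional K Λ]
    {a b : ℤ} (X : Amb Λ) (hX : InC a b X) (hind : Indec X)
    (φ : X ⟶ X) :
    (∃ v : X ⟶ X, φ ≫ v = 𝟙 X ∧ v ≫ φ = 𝟙 X) ∨ (∃ n : ℕ, cpow φ n = 0) := by
  classical
  letI alg : Algebra K (CategoryTheory.End X) := endAlgebra K X
  haveI hf : ∀ i : Finset.Icc a b,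
      FiniteDimensional K (RestrictScalars K Λᵐᵒᵖ (X.X (i : ℤ))) :=
    fun i => restrict_findim K (X.X (i : ℤ)) (hX.2 (i : ℤ)).1
  let Θ : CategoryTheory.End X →ₗ[K]
      (∀ i : Finset.Icc a b,
        RestrictScalars K Λᵐᵒᵖ (X.X (i : ℤ)) →ₗ[K] RestrictScalars K Λᵐᵒᵖ (X.X (i : ℤ))) :=
    { toFun := fun ψ i => restrictK K (HomologicalComplex.Hom.f ψ (i : ℤ))
      map_add' := fun ψ χ => by
        funext i
        ext m
        show (HomologicalComplex.Hom.f (ψ + χ) (i : ℤ)) m = _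
        rw [HomologicalComplex.add_f_apply]
        rfl
      map_smul' := fun c ψ => by
        funext i
        ext m
        rfl }
  have hinj : Function.Injective Θ := by
    intro ψ χ hψχ
    apply chain_ext
    intro i
    by_cases hi : i ∈ Finset.Icc a b
    · have h1 := congrFun hψχ ⟨i, hi⟩
      ext m
      exact LinearMap.congr_fun h1 m
    · have hz : IsZero (X.X i) := by
        apply hX.1 i
        rw [Finset.mem_Icc] at hi
        omega
      exact hz.eq_of_src _ _
  haveI : FiniteDimensional K (CategoryTheory.End X) := FiniteDimensional.of_injective Θ hinj
  have hfin : @Module.Finite K (CategoryTheory.End X) _ _ alg.toModule := this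
  have hint : IsIntegral K (CategoryTheory.End.of φ) := IsIntegral.of_finite K _
  obtain ⟨m, ψ, hcomm, hrel⟩ := exists_pow_rel (CategoryTheory.End.of φ) hint
  have hidem : ∀ e : CategoryTheory.End X, e * e = e → e = 0 ∨ e = 1 :=
    fun e he => idem_eq_zero_or_id X hind e he
  rcases ring_unit_or_nilpotent _ _ m hcomm hrel hidem with hu | hn
  · obtain ⟨u, hu⟩ := hu
    refine Or.inl ⟨(↑u⁻¹ : CategoryTheory.End X), ?_, ?_⟩
    · show (↑u⁻¹ * CategoryTheory.End.of φ : CategoryTheory.End X) = 1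
      rw [← hu, u.inv_mul]
    · show (CategoryTheory.End.of φ * ↑u⁻¹ : CategoryTheory.End X) = 1
      rw [← hu, u.mul_inv]
  · obtain ⟨n, hn⟩ := hn
    exact Or.inr ⟨n, by rw [cpow_eq_pow]; exact hn⟩

end AuxFin
section AuxHomotopy

lemma contractible_of_nullhomotopic_split {X : Amb Λ} (n v : X ⟶ X)
    (h : Homotopy n 0) (hv : n ≫ v = 𝟙 X) : Contractible X := by
  refine ⟨?_⟩
  have h1 : Homotopy (n ≫ v) (0 ≫ v) := h.compRight v
  exact (Homotopy.ofEq hv.symm).trans (h1.trans (Homotopy.ofEq (Limits.zero_comp)))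

lemma homotopyEquiv_section (K : Type) [Field K] [Algebra K Λ] [FiniteDimensional K Λ] {a b : ℤ} (X : Amb Λ) (hX : InC a b X) (hind : Indec X)
    (hnc : ¬ Contractible X) (Y : Amb Λ) (ε : HomotopyEquiv X Y) :
    ∃ ρ : Y ⟶ X, ε.hom ≫ ρ = 𝟙 X ∧ Nonempty (Homotopy (ρ ≫ ε.hom) (𝟙 Y)) := by
  have h0 : Homotopy (ε.hom ≫ ε.inv) (𝟙 X) := ε.homotopyHomInvId
  have hsub : Homotopy (𝟙 X - ε.hom ≫ ε.inv) 0 := Homotopy.equivSubZero h0.symm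
  rcases end_unit_or_nilpotent K X hX hind (ε.hom ≫ ε.inv) with ⟨v, hv1, hv2⟩ | ⟨nn, hnn⟩
  · -- unit case
    refine ⟨ε.inv ≫ v, by rw [← Category.assoc]; exact hv1, ⟨?_⟩⟩
    -- Homotopy v (𝟙 X)
    have hrw : v ≫ (𝟙 X - ε.hom ≫ ε.inv) = v - 𝟙 X := by
      rw [Preadditive.comp_sub, Category.comp_id, hv2]
    have hb : Homotopy (v - 𝟙 X) 0 :=
      (Homotopy.ofEq hrw.symm).trans ((hsub.compLeft v).trans (Homotopy.ofEq Limits.comp_zero))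
    have hv : Homotopy v (𝟙 X) := Homotopy.equivSubZero.symm hb
    -- (ε.inv ≫ v) ≫ ε.hom homotopic to 𝟙 Y
    have h2 : Homotopy ((ε.inv ≫ v) ≫ ε.hom) (ε.inv ≫ 𝟙 X ≫ ε.hom) :=
      (Homotopy.ofEq (Category.assoc _ _ _)).trans ((hv.compRight ε.hom).compLeft ε.inv)
    exact h2.trans ((Homotopy.ofEq (by rw [Category.id_comp])).trans ε.homotopyInvHomId)
  · -- nilpotent case: contradiction
    exfalso
    apply hnc
    have hnil : IsNilpotent (CategoryTheory.End.of (ε.hom ≫ ε.inv)) :=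
      ⟨nn, by rw [← cpow_eq_pow]; exact hnn⟩
    have hu : IsUnit ((1 : CategoryTheory.End X) - CategoryTheory.End.of (ε.hom ≫ ε.inv)) :=
      hnil.isUnit_one_sub
    obtain ⟨u, hu⟩ := hu
    refine contractible_of_nullhomotopic_split (𝟙 X - ε.hom ≫ ε.inv)
      ((↑u⁻¹ : CategoryTheory.End X)) hsub ?_
    have h5 : ((↑u⁻¹ : CategoryTheory.End X) *
        ((1 : CategoryTheory.End X) - CategoryTheory.End.of (ε.hom ≫ ε.inv)) :
        CategoryTheory.End X) = 1 := by
      rw [← hu, u.inv_mul]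
    exact h5

lemma contr_of_corner {X B : Amb Λ} (q : X ⟶ B) (j : B ⟶ X)
    (h : Homotopy (j ≫ q) (𝟙 B)) (n : ℕ) (hn : cpow (q ≫ j) n = 0) : Contractible B := by
  have key : ∀ k : ℕ, Nonempty (Homotopy (𝟙 B) (j ≫ cpow (q ≫ j) k ≫ q)) := by
    intro k
    induction k with
    | zero => exact ⟨(h.symm.trans (Homotopy.ofEq (by simp [cpow]))).trans
        (Homotopy.ofEq rfl)⟩
    | succ k ih =>
      obtain ⟨hk⟩ := ih
      have hstep : Homotopy (j ≫ cpow (q ≫ j) k ≫ q)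
          ((j ≫ cpow (q ≫ j) k ≫ q) ≫ (j ≫ q)) := by
        have := (h.symm.compLeft (j ≫ cpow (q ≫ j) k ≫ q))
        exact (Homotopy.ofEq (Category.comp_id _).symm).trans this
      have heq : (j ≫ cpow (q ≫ j) k ≫ q) ≫ (j ≫ q)
          = j ≫ cpow (q ≫ j) (k+1) ≫ q := by
        show _ = j ≫ (cpow (q ≫ j) k ≫ (q ≫ j)) ≫ q
        simp only [Category.assoc]
      exact ⟨(hk.trans hstep).trans (Homotopy.ofEq heq)⟩
  obtain ⟨hk⟩ := key n
  refine ⟨hk.trans (Homotopy.ofEq ?_)⟩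
  rw [hn, Limits.zero_comp, Limits.comp_zero]

lemma hindec (K : Type) [Field K] [Algebra K Λ] [FiniteDimensional K Λ] {a b : ℤ} (X : Amb Λ) (hX : InC a b X) (hind : Indec X)
    (hnc : ¬ Contractible X) : HIndec X := by
  refine ⟨hnc, fun A B _ _ _ _ hE => ?_⟩
  obtain ⟨ε⟩ := hE
  obtain ⟨ρ, hρ1, ⟨hρ2⟩⟩ := homotopyEquiv_section K X hX hind hnc (A ⊞ B) ε
  obtain ⟨q0, hq0⟩ : ∃ q : X ⟶ B, q = ε.hom ≫ biprod.snd := ⟨_, rfl⟩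
  obtain ⟨j0, hj0⟩ : ∃ j : B ⟶ X, j = biprod.inr ≫ ρ := ⟨_, rfl⟩
  obtain ⟨q1, hq1⟩ : ∃ q : X ⟶ A, q = ε.hom ≫ biprod.fst := ⟨_, rfl⟩
  obtain ⟨j1, hj1⟩ : ∃ j : A ⟶ X, j = biprod.inl ≫ ρ := ⟨_, rfl⟩
  have hsum : q1 ≫ j1 + q0 ≫ j0 = 𝟙 X := by
    have h6 : q1 ≫ j1 + q0 ≫ j0
        = ε.hom ≫ (biprod.fst ≫ biprod.inl + biprod.snd ≫ biprod.inr) ≫ ρ := by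
      rw [hq0, hj0, hq1, hj1]
      simp only [Preadditive.comp_add, Preadditive.add_comp, Category.assoc]
    rw [h6, biprod.total, Category.id_comp, hρ1]
  have hB : Homotopy (j0 ≫ q0) (𝟙 B) := by
    have h1 : Homotopy (biprod.inr ≫ (ρ ≫ ε.hom) ≫ biprod.snd)
        (biprod.inr ≫ 𝟙 (A ⊞ B) ≫ biprod.snd) := (hρ2.compRight biprod.snd).compLeft biprod.inr
    refine (Homotopy.ofEq ?_).trans (h1.trans (Homotopy.ofEq (by simp)))
    rw [hq0, hj0]
    simp only [Category.assoc]
  have hA : Homotopy (j1 ≫ q1) (𝟙 A) := by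
    have h1 : Homotopy (biprod.inl ≫ (ρ ≫ ε.hom) ≫ biprod.fst)
        (biprod.inl ≫ 𝟙 (A ⊞ B) ≫ biprod.fst) := (hρ2.compRight biprod.fst).compLeft biprod.inl
    refine (Homotopy.ofEq ?_).trans (h1.trans (Homotopy.ofEq (by simp)))
    rw [hq1, hj1]
    simp only [Category.assoc]
  rcases end_unit_or_nilpotent K X hX hind (q0 ≫ j0) with ⟨v0, hv01, hv02⟩ | ⟨n0, hn0⟩
  · -- q0 ≫ j0 is invertible; get Homotopy (q0 ≫ j0) (𝟙 X)
    have hE1 : Homotopy (q0 ≫ j0) (𝟙 X) := by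
      have hsq : Homotopy ((q0 ≫ j0) ≫ (q0 ≫ j0)) (q0 ≫ j0) := by
        have h2 : Homotopy (q0 ≫ (j0 ≫ q0) ≫ j0) (q0 ≫ 𝟙 B ≫ j0) :=
          (hB.compRight j0).compLeft q0
        exact ((Homotopy.ofEq (by simp only [Category.assoc])).trans h2).trans
          (Homotopy.ofEq (by rw [Category.id_comp]))
      have h3 : Homotopy (((q0 ≫ j0) ≫ (q0 ≫ j0)) ≫ v0) ((q0 ≫ j0) ≫ v0) := hsq.compRight v0
      refine (Homotopy.ofEq ?_).trans (h3.trans (Homotopy.ofEq hv01))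
      rw [Category.assoc (q0 ≫ j0) (q0 ≫ j0) v0, hv01, Category.comp_id]
    rcases end_unit_or_nilpotent K X hX hind (q1 ≫ j1) with ⟨v1, hv11, hv12⟩ | ⟨n1, hn1⟩
    · -- both invertible: X contractible, contradiction
      exfalso
      apply hnc
      have hE2 : Homotopy (q1 ≫ j1) (𝟙 X) := by
        have hsq : Homotopy ((q1 ≫ j1) ≫ (q1 ≫ j1)) (q1 ≫ j1) := by
          have h2 : Homotopy (q1 ≫ (j1 ≫ q1) ≫ j1) (q1 ≫ 𝟙 A ≫ j1) :=
            (hA.compRight j1).compLeft q1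
          exact ((Homotopy.ofEq (by simp only [Category.assoc])).trans h2).trans
            (Homotopy.ofEq (by rw [Category.id_comp]))
        have h3 : Homotopy (((q1 ≫ j1) ≫ (q1 ≫ j1)) ≫ v1) ((q1 ≫ j1) ≫ v1) := hsq.compRight v1
        refine (Homotopy.ofEq ?_).trans (h3.trans (Homotopy.ofEq hv11))
        rw [Category.assoc (q1 ≫ j1) (q1 ≫ j1) v1, hv11, Category.comp_id]
      have hsum2 : Homotopy (𝟙 X) (𝟙 X + 𝟙 X) :=
        (Homotopy.ofEq hsum.symm).trans (hE2.add hE1)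
      have : Homotopy (𝟙 X + 𝟙 X - 𝟙 X) 0 := Homotopy.equivSubZero hsum2.symm
      exact ⟨(Homotopy.ofEq (add_sub_cancel_right (𝟙 X) (𝟙 X)).symm).trans this⟩
    · -- q1 ≫ j1 nilpotent: A is contractible
      exact Or.inl (contr_of_corner q1 j1 hA n1 hn1)
  · -- q0 ≫ j0 nilpotent: B is contractible
    exact Or.inr (contr_of_corner q0 j0 hB n0 hn0)

end AuxHomotopy
section AuxContr

/-- The idempotent supported in degrees 1 and 2 extracted from a contraction. -/
def ee (X : Amb Λ) (k : X.X 2 ⟶ X.X 1) (hk : X.d 1 2 ≫ k = 𝟙 (X.X 1))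
    (h0 : X.d 0 1 = 0) : X ⟶ X where
  f i :=
    if h1 : i = 1 then
      eqToHom (congrArg X.X h1) ≫ 𝟙 (X.X 1) ≫ eqToHom (congrArg X.X h1).symm
    else if h2 : i = 2 then
      eqToHom (congrArg X.X h2) ≫ (k ≫ X.d 1 2) ≫ eqToHom (congrArg X.X h2).symm
    else 0
  comm' i j hij := by
    have hij' : i + 1 = j := hij
    subst hij'
    by_cases h1 : i = 1
    · subst h1
      rw [dif_pos rfl, dif_neg (by norm_num), dif_pos (show (1:ℤ)+1 = 2 by norm_num)]
      simp only [eqToHom_refl, Category.comp_id, Category.id_comp]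
      have h2 : ((1:ℤ)+1) = 2 := by norm_num
      rw [show X.d 1 (1+1) = X.d 1 2 from rfl]
      rw [← Category.assoc, hk, Category.id_comp]
    · by_cases h2 : i = 2
      · subst h2
        rw [dif_neg (by norm_num), dif_pos rfl, dif_neg (by norm_num), dif_neg (by norm_num)]
        simp only [eqToHom_refl, Category.comp_id, Category.id_comp, Limits.comp_zero]
        rw [Category.assoc, HomologicalComplex.d_comp_d, Limits.comp_zero]
      · by_cases h3 : i = 0
        · subst h3
          rw [dif_neg (by norm_num), dif_neg (by norm_num), dif_pos (show (0:ℤ)+1 = 1 by norm_num)]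
          rw [show X.d 0 (0+1) = X.d 0 1 from rfl, h0]
          simp
        · rw [dif_neg h1, dif_neg h2, dif_neg (show ¬ (i+1 = 1) by omega),
            dif_neg (show ¬ (i+1 = 2) by omega)]
          simp

lemma ee_f_one (X : Amb Λ) (k : X.X 2 ⟶ X.X 1) (hk : X.d 1 2 ≫ k = 𝟙 (X.X 1))
    (h0 : X.d 0 1 = 0) : (ee X k hk h0).f 1 = 𝟙 (X.X 1) := by
  dsimp only [ee]
  rw [dif_pos rfl]
  simp

lemma ee_f_ne (X : Amb Λ) (k : X.X 2 ⟶ X.X 1) (hk : X.d 1 2 ≫ k = 𝟙 (X.X 1))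
    (h0 : X.d 0 1 = 0) (i : ℤ) (h1 : i ≠ 1) (h2 : i ≠ 2) : (ee X k hk h0).f i = 0 := by
  dsimp only [ee]
  rw [dif_neg h1, dif_neg h2]

lemma ee_idem (X : Amb Λ) (k : X.X 2 ⟶ X.X 1) (hk : X.d 1 2 ≫ k = 𝟙 (X.X 1))
    (h0 : X.d 0 1 = 0) : ee X k hk h0 ≫ ee X k hk h0 = ee X k hk h0 := by
  apply chain_ext
  intro i
  rw [HomologicalComplex.comp_f]
  by_cases h1 : i = 1
  · subst h1
    rw [ee_f_one, Category.comp_id]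
  · by_cases h2 : i = 2
    · subst h2
      dsimp only [ee]
      rw [dif_neg (show ¬((2:ℤ) = 1) by norm_num), dif_pos rfl]
      simp only [eqToHom_refl, Category.comp_id, Category.id_comp]
      rw [Category.assoc, ← Category.assoc (X.d 1 2) k (X.d 1 2), hk, Category.id_comp]
    · rw [ee_f_ne X k hk h0 i h1 h2, Limits.zero_comp]

lemma contractible_isZero (X : Amb Λ) (h0z : IsZero (X.X 0)) (hc : Homotopy (𝟙 X) 0)
    (hind : Indec X) (i : ℤ) (hi1 : i ≠ 1) (hi2 : i ≠ 2) :
    IsZero (X.X 1) ∨ IsZero (X.X i) := by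
  have hd01 : X.d 0 1 = 0 := h0z.eq_of_src _ _
  have hdn : dNext 1 hc.hom = X.d 1 2 ≫ hc.hom 2 1 :=
    dNext_eq hc.hom (show (ComplexShape.up ℤ).Rel 1 2 by simp)
  have hpd : prevD 1 hc.hom = hc.hom 1 0 ≫ X.d 0 1 :=
    prevD_eq hc.hom (show (ComplexShape.up ℤ).Rel 0 1 by simp)
  have hk : X.d 1 2 ≫ hc.hom 2 1 = 𝟙 (X.X 1) := by
    have hcm := hc.comm 1
    rw [hdn, hpd, hd01, Limits.comp_zero] at hcm
    simpa using hcm.symm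
  rcases idem_eq_zero_or_id X hind (ee X (hc.hom 2 1) hk hd01)
    (ee_idem X (hc.hom 2 1) hk hd01) with hz | ho
  · left
    rw [Limits.IsZero.iff_id_eq_zero]
    have := congrArg (fun (t : X ⟶ X) => t.f 1) hz
    simpa [ee_f_one] using this
  · right
    rw [Limits.IsZero.iff_id_eq_zero]
    have := congrArg (fun (t : X ⟶ X) => t.f i) ho
    rw [ee_f_ne X (hc.hom 2 1) hk hd01 i hi1 hi2] at this
    rw [HomologicalComplex.id_f] at this
    exact this.symm

end AuxContr
theorem statement2 (K : Type) [Field K] [IsAlgClosed K]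
    (Λ : Type) [Ring Λ] [Algebra K Λ] [FiniteDimensional K Λ]
    (η : ℕ) (hη : 1 ≤ η) (hsgd : IsSGdim Λ η)
    (X : Amb Λ) (hX : InC 1 ((η : ℤ) + 2) X) (hind : Indec X) :
    IsZero (X.X 1) ∨ IsZero (X.X ((η : ℤ) + 2)) := by
  by_cases hc : Contractible X
  · obtain ⟨h⟩ := hc
    have h0z : IsZero (X.X 0) := hX.1 0 (Or.inl (by norm_num))
    exact contractible_isZero X h0z h hind ((η : ℤ) + 2)
      (by omega) (by omega)
  · have hhi : HIndec X := hindec K X hX hind hc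
    have hle : len X ≤ η := hsgd.2 ⟨X, hX.2, ⟨1, (η : ℤ) + 2, hX.1⟩, hhi, rfl⟩
    have hne : (lenSet X).Nonempty :=
      ⟨((η : ℤ) + 2 - 1).toNat, X, 1, (η : ℤ) + 2, by omega,
        ⟨HomotopyEquiv.refl X⟩, hX.2, hX.1, rfl⟩
    obtain ⟨Y, r, s, hrs, ⟨ε⟩, hYproj, hYsupp, hd⟩ := Nat.sInf_mem hne
    obtain ⟨ρ, hρ1, -⟩ := homotopyEquiv_section K X hX hind hc Y ε
    have hretr : ∀ i, ε.hom.f i ≫ ρ.f i = 𝟙 (X.X i) := by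
      intro i
      rw [← HomologicalComplex.comp_f, hρ1, HomologicalComplex.id_f]
    have key : ∀ i, IsZero (Y.X i) → IsZero (X.X i) := by
      intro i hz
      rw [Limits.IsZero.iff_id_eq_zero, ← hretr i, hz.eq_of_tgt (ε.hom.f i) 0,
        Limits.zero_comp]
    by_contra hcon
    push_neg at hcon
    obtain ⟨hz1, hz2⟩ := hcon
    have hr1 : ¬ ((1:ℤ) < r ∨ s < 1) := fun hh => hz1 (key 1 (hYsupp 1 hh))
    have hr2 : ¬ ((η:ℤ) + 2 < r ∨ s < (η:ℤ) + 2) := fun hh => hz2 (key _ (hYsupp _ hh))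
    push_neg at hr1 hr2
    have hsr : (s - r).toNat ≤ η := by rw [← hd]; exact hle
    omega

end Paper
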